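/- For integers b, s, t with 0 ≤ b ≤ t and 1 ≤ s, the determinant of the s×s matrix M whose (i,j) entry is the binomial coefficient C(t, b+(i-1)-(j-1)) equals the product (C(t,b)·C(t+1,b)···C(t+s-1,b)) / (C(b,b)·C(b+1,b)···C(b+s-1,b)), and in particular is a nonzero integer. -/

import Mathlib

open Finset

/-- The Toeplitz matrix `M_{t,b,s,s}` of binomial coefficients, with `(i,j)` entry
`C(t, b+i-j)` (interpreted as `0` when `b+i-j < 0`). -/
noncomputable def toeplitzBinom (t b s : ℕ) : Matrix (Fin s) (Fin s) ℤ :=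
  Matrix.of fun i j : Fin s =>
    if (j : ℕ) ≤ b + (i : ℕ) then (t.choose (b + (i : ℕ) - (j : ℕ)) : ℤ) else 0

namespace Stmt0Aux

/-- `q! * ∏_{r<d} (q+1+r) = (q+d)!` over ℤ. -/
lemma fact_asc (q d : ℕ) :
    ((q.factorial : ℤ)) * ∏ r ∈ range d, ((q : ℤ) + 1 + r) = ((q + d).factorial : ℤ) := by
  induction d with
  | zero => simp
  | succ d ih =>
    rw [Finset.prod_range_succ, ← mul_assoc, ih]
    have : (q + (d+1)).factorial = (q + d).factorial * (q + d + 1) := by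
      have : q + (d + 1) = (q + d) + 1 := by omega
      rw [this, Nat.factorial_succ]; ring
    rw [this]; push_cast; ring

/-- `(∏_{k<j} (n-k)) * (n-j)! = n!` over ℤ, for `j ≤ n`. -/
lemma fact_desc (n : ℕ) : ∀ j ≤ n,
    (∏ k ∈ range j, ((n : ℤ) - k)) * ((n - j).factorial : ℤ) = (n.factorial : ℤ) := by
  intro j
  induction j with
  | zero => simp
  | succ j ih =>
    intro hj
    rw [Finset.prod_range_succ]
    have h2 : ((n - j).factorial : ℤ) = ((n - (j+1)).factorial : ℤ) * ((n:ℤ) - j) := by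
      rw [show (n - j) = (n - (j+1)) + 1 by omega, Nat.factorial_succ]
      have h3 : ((n - (j+1) : ℕ) : ℤ) = (n:ℤ) - j - 1 := by omega
      push_cast [h3]
      ring
    calc (∏ k ∈ range j, ((n : ℤ) - k)) * ((n:ℤ) - j) * ((n - (j+1)).factorial : ℤ)
        = (∏ k ∈ range j, ((n : ℤ) - k)) * (((n - (j+1)).factorial : ℤ) * ((n:ℤ) - j)) := by ring
      _ = (∏ k ∈ range j, ((n : ℤ) - k)) * ((n - j).factorial : ℤ) := by rw [← h2]
      _ = (n.factorial : ℤ) := ih (by omega)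

/-- Sweep family of matrices. -/
noncomputable def W (t b s m : ℕ) : Matrix (Fin s) (Fin s) ℤ :=
  Matrix.of fun i j =>
    (∏ k ∈ range (j : ℕ), (((i : ℕ) : ℤ) + b - k)) *
      (∏ k ∈ Ico ((j : ℕ) + 1 + m) s, ((t : ℤ) - b + k - ((i : ℕ) : ℤ)))

lemma W_apply (t b s m : ℕ) (i j : Fin s) :
    W t b s m i j = (∏ k ∈ range (j : ℕ), (((i : ℕ) : ℤ) + b - k)) *
      (∏ k ∈ Ico ((j : ℕ) + 1 + m) s, ((t : ℤ) - b + k - ((i : ℕ) : ℤ))) := rfl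

/-- Key column identity behind the sweep. -/
lemma colKey (t b s m : ℕ) (i : Fin s) (r : ℕ) (hr : r + 1 + m < s) :
    ((t : ℤ) + 1 + m) * W t b s (m+1) i ⟨r, by omega⟩ =
      W t b s m i ⟨r, by omega⟩ + W t b s m i ⟨r+1, by omega⟩ := by
  simp only [W_apply]
  rw [Finset.prod_eq_prod_Ico_succ_bot hr]
  rw [show r + 1 + m + 1 = r + 1 + (m + 1) by omega]
  rw [show (r:ℕ) + 1 + 1 + m = r + 1 + (m+1) by omega]
  rw [Finset.prod_range_succ]
  push_cast
  ring

/-- Intermediate matrices for the column operations. -/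
noncomputable def Xmat (t b s m r : ℕ) : Matrix (Fin s) (Fin s) ℤ :=
  Matrix.of fun i j =>
    if (j : ℕ) < r then ((t : ℤ) + 1 + m) * W t b s (m+1) i j else W t b s m i j

lemma detX (t b s m : ℕ) : ∀ r, r + m + 1 ≤ s →
    (Xmat t b s m r).det = (W t b s m).det := by
  intro r
  induction r with
  | zero =>
    intro _
    have hX : Xmat t b s m 0 = W t b s m := by
      ext i j
      simp [Xmat]
    rw [hX]
  | succ r ih =>
    intro h
    have hrs : r < s := by omega
    have hr1s : r + 1 < s := by omega
    have hkey : Xmat t b s m (r+1) =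
        Matrix.updateCol (Xmat t b s m r) ⟨r, hrs⟩
          (fun i => Xmat t b s m r i ⟨r, hrs⟩ + Xmat t b s m r i ⟨r+1, hr1s⟩) := by
      ext i j
      rw [Matrix.updateCol_apply]
      by_cases hj : j = ⟨r, hrs⟩
      · subst hj
        rw [if_pos rfl]
        have e1 : Xmat t b s m (r+1) i ⟨r, hrs⟩ = ((t:ℤ)+1+m) * W t b s (m+1) i ⟨r, hrs⟩ := by
          simp only [Xmat, Matrix.of_apply]
          rw [if_pos (show r < r + 1 by omega)]
        have e2 : Xmat t b s m r i ⟨r, hrs⟩ = W t b s m i ⟨r, hrs⟩ := by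
          simp only [Xmat, Matrix.of_apply]
          rw [if_neg (show ¬ (r < r) by omega)]
        have e3 : Xmat t b s m r i ⟨r+1, hr1s⟩ = W t b s m i ⟨r+1, hr1s⟩ := by
          simp only [Xmat, Matrix.of_apply]
          rw [if_neg (show ¬ (r + 1 < r) by omega)]
        rw [e1, e2, e3]
        exact colKey t b s m i r (by omega)
      · rw [if_neg hj]
        have hjr : (j : ℕ) ≠ r := fun hc => hj (Fin.ext hc)
        simp only [Xmat, Matrix.of_apply]
        by_cases h2 : (j : ℕ) < r
        · rw [if_pos (by omega), if_pos h2]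
        · rw [if_neg (by omega), if_neg h2]
    rw [hkey, Matrix.det_updateCol_add_self _ (by simp [Fin.ext_iff])]
    exact ih (by omega)

lemma W_stable (t b s m : ℕ) (i j : Fin s) (h : s ≤ (j : ℕ) + 1 + m) :
    W t b s m i j = W t b s (m+1) i j := by
  simp only [W_apply]
  rw [Finset.Ico_eq_empty (by omega), Finset.Ico_eq_empty (by omega)]

lemma sweep_step (t b s m : ℕ) :
    (W t b s m).det = ((t : ℤ) + 1 + m) ^ (s - 1 - m) * (W t b s (m+1)).det := by
  by_cases hms : s ≤ m + 1
  · rw [show s - 1 - m = 0 by omega, pow_zero, one_mul]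
    congr 1
    ext i j
    exact W_stable t b s m i j (by omega)
  · set K := s - 1 - m with hK
    have h1 : (Xmat t b s m K).det = (W t b s m).det := detX t b s m K (by omega)
    have h2 : Xmat t b s m K = (W t b s (m+1)) *
        Matrix.diagonal (fun j : Fin s => if (j : ℕ) < K then ((t : ℤ) + 1 + m) else 1) := by
      ext i j
      rw [Matrix.mul_diagonal]
      simp only [Xmat, Matrix.of_apply]
      by_cases hj : (j : ℕ) < K
      · rw [if_pos hj, if_pos hj, mul_comm]
      · rw [if_neg hj, if_neg hj, mul_one]
        exact W_stable t b s m i j (by omega)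
    have h3 : (∏ j : Fin s, (if ((j : ℕ) < K) then ((t : ℤ) + 1 + m) else 1))
        = ((t : ℤ) + 1 + m) ^ K := by
      rw [Fin.prod_univ_eq_prod_range (fun j => if (j < K) then ((t : ℤ) + 1 + m) else 1) s]
      rw [← Finset.prod_range_mul_prod_Ico _ (show K ≤ s by omega)]
      rw [Finset.prod_congr rfl (fun j hj => if_pos (Finset.mem_range.mp hj)),
        Finset.prod_const,
        Finset.prod_congr rfl (fun j hj => if_neg (by
          have := (Finset.mem_Ico.mp hj).1; omega)),
        Finset.prod_const, one_pow, mul_one, Finset.card_range]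
    rw [← h1, h2, Matrix.det_mul, Matrix.det_diagonal, h3, mul_comm]

lemma sweepAll (t b s : ℕ) : ∀ M : ℕ, (W t b s 0).det =
    (∏ m ∈ range M, ((t : ℤ) + 1 + m) ^ (s - 1 - m)) * (W t b s M).det := by
  intro M
  induction M with
  | zero => simp
  | succ M ih =>
    rw [ih, sweep_step t b s M, Finset.prod_range_succ]
    ring

open Polynomial in
lemma detW_last (t b s : ℕ) :
    (W t b s (s-1)).det = ∏ i ∈ range s, ((i.factorial : ℤ)) := by
  have hW : W t b s (s-1) =
      Matrix.of fun i j : Fin s => ((∏ k ∈ range (j:ℕ), (X + C ((b:ℤ) - k))).eval ((i:ℕ):ℤ)) := by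
    ext i j
    simp only [W, Matrix.of_apply]
    rw [Finset.Ico_eq_empty (by omega), Finset.prod_empty, mul_one, eval_prod]
    exact Finset.prod_congr rfl (fun k _ => by simp; ring)
  rw [hW, ← Matrix.det_eval_matrixOfPolynomials_eq_det_vandermonde
    (fun i : Fin s => ((i:ℕ):ℤ))
    (fun j : Fin s => ∏ k ∈ range (j:ℕ), (X + C ((b:ℤ) - k)))
    (fun j => by
      rw [Polynomial.natDegree_prod_of_monic _ _ (fun k _ => monic_X_add_C _),
        Finset.sum_congr rfl (fun k _ => Polynomial.natDegree_X_add_C _)]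
      simp)
    (fun j => monic_prod_of_monic _ _ (fun k _ => monic_X_add_C _))]
  rw [Matrix.det_vandermonde]
  have key : ∀ i : Fin s, (∏ j ∈ Ioi i, (((j:ℕ):ℤ) - ((i:ℕ):ℤ)))
      = (((s - 1 - (i:ℕ)).factorial : ℤ)) := by
    intro i
    have hic : Ioc ((i:ℕ)) (s-1) = Ico ((i:ℕ)+1) s := by
      have := i.isLt
      ext x
      simp only [Finset.mem_Ioc, Finset.mem_Ico]
      omega
    have hbij : (∏ j ∈ Ioi i, (((j:ℕ):ℤ) - ((i:ℕ):ℤ)))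
        = ∏ k ∈ Ico ((i:ℕ)+1) s, ((k:ℤ) - ((i:ℕ):ℤ)) := by
      rw [show Ico ((i:ℕ)+1) s = Ioo (i:ℕ) s by ext x; simp only [Finset.mem_Ioo, Finset.mem_Ico]; omega,
        ← Fin.map_valEmbedding_Ioi, Finset.prod_map]
      rfl
    rw [hbij, Finset.prod_Ico_eq_prod_range]
    have := fact_asc 0 (s - ((i:ℕ)+1))
    simp only [Nat.factorial_zero, Nat.cast_one, one_mul, Nat.zero_add] at this
    rw [show s - 1 - (i:ℕ) = s - ((i:ℕ)+1) by omega, ← this]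
    exact Finset.prod_congr rfl (fun k _ => by push_cast; ring)
  rw [Finset.prod_congr rfl (fun i _ => key i)]
  rw [Fin.prod_univ_eq_prod_range (fun i => (((s - 1 - i).factorial : ℤ))) s]
  rw [← Finset.prod_range_reflect (fun i => ((i.factorial : ℤ))) s]

lemma entry_id (t b s : ℕ) (hb : b ≤ t) (i j : Fin s) :
    (((b + (i:ℕ)).factorial : ℤ) * (((t - b) + (s - 1 - (i:ℕ))).factorial : ℤ)) *
      toeplitzBinom t b s i j = ((t.factorial : ℤ)) * W t b s 0 i j := by
  set ii := (i : ℕ)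
  set jj := (j : ℕ)
  have hii : ii < s := i.isLt
  have hjj : jj < s := j.isLt
  simp only [toeplitzBinom, W, Matrix.of_apply]
  by_cases h1 : jj ≤ b + ii
  · rw [if_pos h1]
    by_cases h2 : b + ii - jj ≤ t
    · set m := b + ii - jj with hm
      set q := t - m with hq
      set e := (t - b) + (s - 1 - ii) with he
      have hP1 : (∏ k ∈ range jj, ((ii : ℤ) + b - k)) * ((m.factorial : ℤ))
          = (((b + ii).factorial : ℤ)) := by
        have : ∀ k ∈ range jj, ((ii : ℤ) + b - k) = (((b + ii : ℕ) : ℤ) - k) := by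
          intro k _; push_cast; ring
        rw [Finset.prod_congr rfl this]
        have := fact_desc (b + ii) jj (by omega)
        rwa [show b + ii - jj = m by omega] at this
      have hP2 : ((q.factorial : ℤ)) * (∏ k ∈ Ico (jj + 1 + 0) s, ((t : ℤ) - b + k - (ii:ℤ)))
          = ((e.factorial : ℤ)) := by
        rw [Finset.prod_Ico_eq_prod_range]
        have hcong : ∀ r ∈ range (s - (jj + 1 + 0)),
            ((t : ℤ) - b + (((jj + 1 + 0) + r : ℕ) : ℤ) - (ii:ℤ)) = ((q : ℤ) + 1 + r) := by
          intro r _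
          have hqz : (q : ℤ) = (t:ℤ) - b - ii + jj := by omega
          rw [hqz]; push_cast; ring
        rw [Finset.prod_congr rfl hcong, fact_asc]
        have : q + (s - (jj + 1 + 0)) = e := by omega
        rw [this]
      have hc : ((t.choose m : ℤ)) * (m.factorial : ℤ) * (q.factorial : ℤ) = (t.factorial : ℤ) := by
        have := Nat.choose_mul_factorial_mul_factorial h2
        rw [← hq] at this
        exact_mod_cast congrArg (Nat.cast : ℕ → ℤ) this
      apply mul_right_cancel₀ (b := (m.factorial : ℤ) * (q.factorial : ℤ)) (by positivity)
      rw [← hP1, ← hP2, ← hc]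
      ring
    · push_neg at h2
      rw [Nat.choose_eq_zero_of_lt h2]
      have hmem : b + ii - t ∈ Ico (jj + 1 + 0) s := by
        simp only [Finset.mem_Ico]
        omega
      rw [Finset.prod_eq_zero hmem (by
        have : ((b + ii - t : ℕ) : ℤ) = (b:ℤ) + ii - t := by omega
        rw [this]; ring)]
      simp
  · rw [if_neg h1]
    push_neg at h1
    have hmem : b + ii ∈ range jj := by
      simp only [Finset.mem_range]; omega
    rw [Finset.prod_eq_zero hmem (by push_cast; ring)]
    simp

/-- `t! * ∏_{m<d}(t+1+m) = (t+d)!` in ℕ. -/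
lemma fact_asc_nat (t : ℕ) : ∀ d : ℕ,
    t.factorial * ∏ m ∈ range d, (t + 1 + m) = (t + d).factorial := by
  intro d
  induction d with
  | zero => simp
  | succ d ih =>
    rw [Finset.prod_range_succ, ← mul_assoc, ih, show t + (d+1) = (t + d) + 1 by omega,
      Nat.factorial_succ]
    ring

lemma L1 (t : ℕ) : ∀ s : ℕ, t.factorial ^ s * ∏ m ∈ range (s - 1), (t + 1 + m) ^ (s - 1 - m)
    = ∏ j ∈ range s, (t + j).factorial := by
  intro s
  induction s with
  | zero => simp
  | succ s ih =>
    rcases Nat.eq_zero_or_pos s with hs | hs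
    · subst hs; simp
    · have hexp : ∀ m ∈ range s, (t + 1 + m) ^ (s - m)
          = (t + 1 + m) ^ (s - 1 - m) * (t + 1 + m) := by
        intro m hm
        rw [Finset.mem_range] at hm
        rw [← pow_succ]
        congr 1
        omega
      have hsplit : ∏ m ∈ range s, (t + 1 + m) ^ (s - 1 - m)
          = ∏ m ∈ range (s - 1), (t + 1 + m) ^ (s - 1 - m) := by
        rw [show s = (s - 1) + 1 by omega, Finset.prod_range_succ]
        rw [show s - 1 + 1 = s by omega]
        rw [show s - 1 - (s - 1) = 0 by omega, pow_zero, mul_one]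
      rw [show s + 1 - 1 = s by omega]
      rw [Finset.prod_congr rfl hexp, Finset.prod_mul_distrib, hsplit]
      rw [Finset.prod_range_succ, ← ih]
      rw [← fact_asc_nat t s]
      ring

lemma L2 (t b j : ℕ) (hb : b ≤ t) :
    (b + j).choose b * (t + j).factorial * j.factorial
      = (t + j).choose b * (b + j).factorial * ((t - b) + j).factorial := by
  apply Nat.eq_of_mul_eq_mul_left (Nat.factorial_pos b)
  have h1 : (b + j).choose b * b.factorial * j.factorial = (b + j).factorial := by
    have := Nat.choose_mul_factorial_mul_factorial (show b ≤ b + j by omega)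
    rwa [show b + j - b = j by omega] at this
  have h2 : (t + j).choose b * b.factorial * ((t - b) + j).factorial = (t + j).factorial := by
    have := Nat.choose_mul_factorial_mul_factorial (show b ≤ t + j by omega)
    rwa [show t + j - b = (t - b) + j by omega] at this
  calc b.factorial * ((b + j).choose b * (t + j).factorial * j.factorial)
      = ((b + j).choose b * b.factorial * j.factorial) * (t + j).factorial := by ring
    _ = (b + j).factorial * (t + j).factorial := by rw [h1]
    _ = ((t + j).choose b * b.factorial * ((t - b) + j).factorial) * (b + j).factorial := by
        rw [h2]; ring
    _ = b.factorial * ((t + j).choose b * (b + j).factorial * ((t - b) + j).factorial) := by ring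

end Stmt0Aux

open Stmt0Aux in
theorem stmt0 (t b s : ℕ) (hb : b ≤ t) (hs : 1 ≤ s) :
    (∏ j ∈ Finset.range s, ((b + j).choose b : ℤ)) * (toeplitzBinom t b s).det =
      ∏ j ∈ Finset.range s, ((t + j).choose b : ℤ) ∧
    (toeplitzBinom t b s).det ≠ 0 := by
  -- diagonal scaling identity
  have hmat : Matrix.diagonal (fun i : Fin s =>
        (((b + (i:ℕ)).factorial : ℤ) * (((t - b) + (s - 1 - (i:ℕ))).factorial : ℤ)))
      * toeplitzBinom t b s = (t.factorial : ℤ) • W t b s 0 := by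
    ext i j
    rw [Matrix.diagonal_mul, Matrix.smul_apply]
    rw [entry_id t b s hb i j]
    rfl
  have hdet := congrArg Matrix.det hmat
  rw [Matrix.det_mul, Matrix.det_diagonal, Matrix.det_smul, Fintype.card_fin] at hdet
  rw [sweepAll t b s (s-1), detW_last] at hdet
  -- convert LHS products to range
  rw [Fin.prod_univ_eq_prod_range (fun i =>
      (((b + i).factorial : ℤ) * (((t - b) + (s - 1 - i)).factorial : ℤ))) s] at hdet
  rw [Finset.prod_mul_distrib] at hdet
  rw [Finset.prod_range_reflect (fun i => (((t - b) + i).factorial : ℤ)) s] at hdet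
  -- RHS : t!^s * sweep product = ∏ (t+j)!
  have hR : ((t.factorial : ℤ)) ^ s * (∏ m ∈ range (s-1), ((t : ℤ) + 1 + m) ^ (s - 1 - m))
      = ∏ j ∈ range s, (((t + j).factorial : ℤ)) := by
    have h := congrArg (fun n : ℕ => (n : ℤ)) (L1 t s)
    push_cast at h ⊢
    convert h using 2
  rw [show ((t.factorial : ℤ)) ^ s *
      ((∏ m ∈ range (s-1), ((t : ℤ) + 1 + m) ^ (s - 1 - m)) * ∏ i ∈ range s, ((i.factorial : ℤ)))
      = (((t.factorial : ℤ)) ^ s * (∏ m ∈ range (s-1), ((t : ℤ) + 1 + m) ^ (s - 1 - m)))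
        * ∏ i ∈ range s, ((i.factorial : ℤ)) by ring, hR] at hdet
  -- hdet : (∏ (b+i)!) * (∏ (t-b+i)!) * det M = (∏ (t+j)!) * (∏ j!)
  set DM := (toeplitzBinom t b s).det with hDM
  set Pb := ∏ i ∈ range s, (((b + i).factorial : ℤ)) with hPb
  set Ptb := ∏ i ∈ range s, (((t - b) + i).factorial : ℤ) with hPtb
  set Pt := ∏ j ∈ range s, (((t + j).factorial : ℤ)) with hPt
  set Psf := ∏ i ∈ range s, ((i.factorial : ℤ)) with hPsf
  have hKne : Pb * Ptb ≠ 0 := by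
    apply mul_ne_zero <;>
      exact Finset.prod_ne_zero_iff.mpr
        (fun i _ => Int.natCast_ne_zero.mpr (Nat.factorial_ne_zero _))
  have key : (∏ j ∈ range s, ((b + j).choose b : ℤ)) * (Pt * Psf)
      = (Pb * Ptb) * ∏ j ∈ range s, ((t + j).choose b : ℤ) := by
    rw [hPt, hPsf, hPb, hPtb, ← Finset.prod_mul_distrib, ← Finset.prod_mul_distrib,
      ← Finset.prod_mul_distrib, ← Finset.prod_mul_distrib]
    apply Finset.prod_congr rfl
    intro j _
    have h := congrArg (fun n : ℕ => (n : ℤ)) (L2 t b j hb)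
    push_cast at h
    linear_combination h
  have part1 : (∏ j ∈ range s, ((b + j).choose b : ℤ)) * DM
      = ∏ j ∈ range s, ((t + j).choose b : ℤ) := by
    apply mul_left_cancel₀ hKne
    calc (Pb * Ptb) * ((∏ j ∈ range s, ((b + j).choose b : ℤ)) * DM)
        = (∏ j ∈ range s, ((b + j).choose b : ℤ)) * (Pb * Ptb * DM) := by ring
      _ = (∏ j ∈ range s, ((b + j).choose b : ℤ)) * (Pt * Psf) := by
          rw [show Pb * Ptb * DM = Pt * Psf from by
            rw [hDM]
            linear_combination hdet]
      _ = (Pb * Ptb) * ∏ j ∈ range s, ((t + j).choose b : ℤ) := key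
  refine ⟨part1, ?_⟩
  intro h0
  rw [h0, mul_zero] at part1
  have hne : (∏ j ∈ range s, ((t + j).choose b : ℤ)) ≠ 0 :=
    Finset.prod_ne_zero_iff.mpr (fun j _ =>
      Int.natCast_ne_zero.mpr (Nat.choose_pos (le_trans hb (Nat.le_add_right t j))).ne')
  exact hne part1.symm
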